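/- Assume conditions (C1), (C2) and (C3) hold for Γ and h, let ρ_k > 0 and p_k > 0 with h(ρ_k) ≤ p_k, and let ρ_max > ρ_k be the unique density with (ρ_max − ρ_k)Γ(ρ_max) = 2ρ_k. Then for every p > p_k there exists exactly one ρ ∈ (ρ_k, ρ_max) such that Φ(p, ρ) = 0. -/

import Mathlib

open Set Filter

/-- The Hugoniot function `Φ(p,ρ)` associated with the Mie-Grüneisen EOS
`p(ρ,e) = Γ(ρ)ρe + h(ρ)` and the fixed state `(ρ_k, p_k)`. -/
noncomputable def hugoniot (Γ h : ℝ → ℝ) (ρk pk p ρ : ℝ) : ℝ :=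
  Γ ρk * ρk * (p - h ρ) - Γ ρ * ρ * (pk - h ρk)
    - 1 / 2 * Γ ρk * Γ ρ * (p + pk) * (ρ - ρk)

/-- Under conditions (C1), (C2) and (C3), for every pressure `p > p_k`
the Hugoniot relation `Φ(p,ρ) = 0` determines a unique post-shock density
`ρ ∈ (ρ_k, ρ_max)`. -/
theorem hugoniot_unique_root
    (Γ h : ℝ → ℝ) (Γinf ρk pk ρmax : ℝ)
    (hΓd : ∀ ρ > (0 : ℝ), DifferentiableAt ℝ Γ ρ)
    (hΓd2 : ∀ ρ > (0 : ℝ), DifferentiableAt ℝ (deriv Γ) ρ)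
    (hhd : ∀ ρ > (0 : ℝ), DifferentiableAt ℝ h ρ)
    (hhd2 : ∀ ρ > (0 : ℝ), DifferentiableAt ℝ (deriv h) ρ)
    -- condition (C1)
    (hC1a : ∀ ρ > (0 : ℝ), deriv Γ ρ ≤ 0)
    (hC1b : ∀ ρ > (0 : ℝ), 0 ≤ deriv (fun x => x * Γ x) ρ)
    (hC1c : ∀ ρ > (0 : ℝ), 0 ≤ deriv (deriv (fun x => x * Γ x)) ρ)
    -- condition (C2)
    (hΓinf : 0 < Γinf)
    (hC2a : ∀ ρ > (0 : ℝ), Γinf ≤ Γ ρ)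
    (hC2b : ∀ ρ > (0 : ℝ), Γ ρ ≤ Γinf + 2)
    -- condition (C3)
    (hC3a : ∀ ρ > (0 : ℝ), 0 ≤ deriv h ρ)
    (hC3b : ∀ ρ > (0 : ℝ), 0 ≤ deriv (deriv h) ρ)
    (hρk : 0 < ρk) (hpk : 0 < pk) (hhk : h ρk ≤ pk)
    (hρmax : ρk < ρmax) (hmax : (ρmax - ρk) * Γ ρmax = 2 * ρk) :
    ∀ p > pk, ∃! ρ : ℝ, ρ ∈ Ioo ρk ρmax ∧ hugoniot Γ h ρk pk p ρ = 0 := by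
  intro p hp
  have hΓk : 0 < Γ ρk := lt_of_lt_of_le hΓinf (hC2a ρk hρk)
  have hρmax0 : 0 < ρmax := hρk.trans hρmax
  set f : ℝ → ℝ := fun ρ => hugoniot Γ h ρk pk p ρ with hfdef
  -- derivative of f at any ρ > 0
  have key : ∀ ρ > (0:ℝ), HasDerivAt f
      (-(Γ ρk * ρk * deriv h ρ) - (deriv Γ ρ * ρ + Γ ρ * 1) * (pk - h ρk)
        - ((1 / 2 * Γ ρk * deriv Γ ρ * (p + pk)) * (ρ - ρk)
            + 1 / 2 * Γ ρk * Γ ρ * (p + pk) * 1)) ρ := by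
    intro ρ hρ
    have hh := (hhd ρ hρ).hasDerivAt
    have hg := (hΓd ρ hρ).hasDerivAt
    have t1 : HasDerivAt (fun x => Γ ρk * ρk * (p - h x))
        (Γ ρk * ρk * (0 - deriv h ρ)) ρ := ((hasDerivAt_const ρ p).sub hh).const_mul _
    have t2 : HasDerivAt (fun x => Γ x * x * (pk - h ρk))
        ((deriv Γ ρ * ρ + Γ ρ * 1) * (pk - h ρk)) ρ :=
      (hg.mul (hasDerivAt_id' ρ)).mul_const _
    have t3 : HasDerivAt (fun x => 1 / 2 * Γ ρk * Γ x * (p + pk) * (x - ρk))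
        ((1 / 2 * Γ ρk * deriv Γ ρ * (p + pk)) * (ρ - ρk)
          + 1 / 2 * Γ ρk * Γ ρ * (p + pk) * 1) ρ := by
      have hu : HasDerivAt (fun x => 1 / 2 * Γ ρk * Γ x * (p + pk))
          (1 / 2 * Γ ρk * deriv Γ ρ * (p + pk)) ρ := by
        have := (hg.const_mul (1 / 2 * Γ ρk)).mul_const (p + pk)
        convert this using 2 <;> ring
      exact hu.mul ((hasDerivAt_id' ρ).sub_const ρk)
    have := (t1.sub t2).sub t3
    exact this.congr_deriv (by ring)
  have hderiv : ∀ ρ > (0:ℝ), deriv f ρ =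
      -(Γ ρk * ρk * deriv h ρ) - (deriv Γ ρ * ρ + Γ ρ * 1) * (pk - h ρk)
        - ((1 / 2 * Γ ρk * deriv Γ ρ * (p + pk)) * (ρ - ρk)
            + 1 / 2 * Γ ρk * Γ ρ * (p + pk) * 1) := fun ρ hρ => (key ρ hρ).deriv
  -- deriv (fun x => x * Γ x) ρ = Γ ρ + ρ * deriv Γ ρ
  have hGderiv : ∀ ρ > (0:ℝ), deriv (fun x => x * Γ x) ρ = 1 * Γ ρ + ρ * deriv Γ ρ := by
    intro ρ hρ
    exact ((hasDerivAt_id' ρ).mul (hΓd ρ hρ).hasDerivAt).deriv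
  have hGpos : ∀ ρ > (0:ℝ), 0 ≤ Γ ρ + ρ * deriv Γ ρ := by
    intro ρ hρ
    have := hC1b ρ hρ
    rw [hGderiv ρ hρ] at this
    linarith
  -- f is strictly decreasing on Icc ρk ρmax
  have hIccsub : Icc ρk ρmax ⊆ Ioi 0 := fun x hx => lt_of_lt_of_le hρk hx.1
  have hfc : ContinuousOn f (Icc ρk ρmax) := fun x hx =>
    ((key x (hIccsub hx)).differentiableAt.continuousAt).continuousWithinAt
  have hfneg : ∀ x ∈ interior (Icc ρk ρmax), deriv f x < 0 := by
    intro x hx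
    rw [interior_Icc] at hx
    have hx0 : (0:ℝ) < x := hρk.trans hx.1
    rw [hderiv x hx0]
    have h1 : 0 ≤ Γ ρk * ρk * deriv h x :=
      mul_nonneg (mul_nonneg hΓk.le hρk.le) (hC3a x hx0)
    have h2 : 0 ≤ (deriv Γ x * x + Γ x * 1) * (pk - h ρk) := by
      have := hGpos x hx0
      have : 0 ≤ deriv Γ x * x + Γ x * 1 := by linarith
      exact mul_nonneg this (by linarith)
    have hΓ'le := hC1a x hx0
    have hΓx : Γinf ≤ Γ x := hC2a x hx0
    -- bracket positivity
    have hbr : 0 < deriv Γ x * (x - ρk) + Γ x := by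
      rcases lt_or_eq_of_le hΓ'le with hlt | heq
      · have hA := hGpos x hx0
        nlinarith
      · rw [← heq]; nlinarith
    have h3 : 0 < (1 / 2 * Γ ρk * deriv Γ x * (p + pk)) * (x - ρk)
        + 1 / 2 * Γ ρk * Γ x * (p + pk) * 1 := by
      have hpp : 0 < p + pk := by linarith
      have h4 : (0:ℝ) < 1 / 2 * Γ ρk := by linarith
      nlinarith [mul_pos (mul_pos h4 hpp) hbr]
    linarith
  have hanti : StrictAntiOn f (Icc ρk ρmax) :=
    strictAntiOn_of_deriv_neg (convex_Icc ρk ρmax) hfc hfneg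
  -- endpoint values
  have hfρk : f ρk = Γ ρk * ρk * (p - pk) := by
    simp only [hfdef, hugoniot]; ring
  have hfρkpos : 0 < f ρk := by
    rw [hfρk]; exact mul_pos (mul_pos hΓk hρk) (by linarith)
  -- monotonicity of x * Γ x and h on Icc
  have hmono : MonotoneOn (fun x => x * Γ x) (Icc ρk ρmax) := by
    apply monotoneOn_of_deriv_nonneg (convex_Icc ρk ρmax)
    · exact fun x hx => ((differentiableAt_id.mul (hΓd x (hIccsub hx))).continuousAt).continuousWithinAt
    · intro x hx
      rw [interior_Icc] at hx
      exact (differentiableAt_id.mul (hΓd x (hρk.trans hx.1))).differentiableWithinAt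
    · intro x hx
      rw [interior_Icc] at hx
      exact hC1b x (hρk.trans hx.1)
  have hhmono : MonotoneOn h (Icc ρk ρmax) := by
    apply monotoneOn_of_deriv_nonneg (convex_Icc ρk ρmax)
    · exact fun x hx => ((hhd x (hIccsub hx)).continuousAt).continuousWithinAt
    · intro x hx
      rw [interior_Icc] at hx
      exact (hhd x (hρk.trans hx.1)).differentiableWithinAt
    · intro x hx
      rw [interior_Icc] at hx
      exact hC3a x (hρk.trans hx.1)
  have hGle : ρk * Γ ρk ≤ ρmax * Γ ρmax :=
    hmono (left_mem_Icc.2 hρmax.le) (right_mem_Icc.2 hρmax.le) hρmax.le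
  have hhle : h ρk ≤ h ρmax :=
    hhmono (left_mem_Icc.2 hρmax.le) (right_mem_Icc.2 hρmax.le) hρmax.le
  have hfρmax : f ρmax = -(Γ ρk * ρk * (h ρmax + pk)) - (Γ ρmax * ρmax) * (pk - h ρk) := by
    simp only [hfdef, hugoniot]
    linear_combination (-(1 / 2) * Γ ρk * (p + pk)) * hmax
  have hfρmaxneg : f ρmax < 0 := by
    rw [hfρmax]
    have hGρkρk : 0 < Γ ρk * ρk := mul_pos hΓk hρk
    nlinarith [mul_le_mul_of_nonneg_right hGle (sub_nonneg.2 hhk),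
      mul_le_mul_of_nonneg_left hhle hGρkρk.le]
  -- existence via IVT
  have hivt : (0:ℝ) ∈ f '' Ioo ρk ρmax := by
    apply intermediate_value_Ioo' hρmax.le hfc
    exact ⟨hfρmaxneg, hfρkpos⟩
  obtain ⟨ρ0, hρ0mem, hρ0⟩ := hivt
  refine ⟨ρ0, ⟨hρ0mem, hρ0⟩, ?_⟩
  intro y hy
  have h1 : y ∈ Icc ρk ρmax := Ioo_subset_Icc_self hy.1
  have h2 : ρ0 ∈ Icc ρk ρmax := Ioo_subset_Icc_self hρ0mem
  exact hanti.injOn h1 h2 (hy.2.trans hρ0.symm)
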